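/- arXiv:2412.02783 — 3 statements merged into one kernel-verified Lean document; each statement's English description precedes it below -/
import Mathlib

section
/- Suppose ψ is a Z₁-function (ψ(z, ϑ₁(z)) = 0 for all z), and there exists a positive function p : Θ → ℝ such that for each z ∈ X the map t ↦ p(t)ψ(z,t) is decreasing on Θ. Then for all x, y ∈ X with ϑ₁(x) < ϑ₁(y), the map t ↦ −ψ(x,t)/ψ(y,t) is increasing on (ϑ₁(x), ϑ₁(y)). -/
open Set

/-- If `ψ` is a `Z₁`-function and there is a positive function `p` such that
`t ↦ p(t)ψ(z,t)` is decreasing on `Θ` for every `z`, then for all `x, y` with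
`ϑ₁(x) < ϑ₁(y)` the map `t ↦ -ψ(x,t)/ψ(y,t)` is increasing on `(ϑ₁(x), ϑ₁(y))`. -/
theorem monotone_quotient_of_decreasing_product {X : Type*} [Nonempty X]
    (Θ : Set ℝ) (hopen : IsOpen Θ) (hord : Θ.OrdConnected)
    (hnd : ∃ a ∈ Θ, ∃ b ∈ Θ, a ≠ b)
    (ψ : X → ℝ → ℝ)
    (ϑ : X → ℝ) (hϑmem : ∀ x : X, ϑ x ∈ Θ)
    (hTpos : ∀ x : X, ∀ t ∈ Θ, t < ϑ x → 0 < ψ x t)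
    (hTneg : ∀ x : X, ∀ t ∈ Θ, ϑ x < t → ψ x t < 0)
    (hZ : ∀ x : X, ψ x (ϑ x) = 0)
    (p : ℝ → ℝ) (hp : ∀ t ∈ Θ, 0 < p t)
    (hdec : ∀ z : X, AntitoneOn (fun t => p t * ψ z t) Θ) :
    ∀ x y : X, ϑ x < ϑ y →
      MonotoneOn (fun t => -(ψ x t / ψ y t)) (Set.Ioo (ϑ x) (ϑ y)) := by
  intro x y hxy s hs t ht hst
  have hsub : Set.Ioo (ϑ x) (ϑ y) ⊆ Θ := by
    intro u hu
    exact hord.out (hϑmem x) (hϑmem y) ⟨hu.1.le, hu.2.le⟩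
  have hsΘ : s ∈ Θ := hsub hs
  have htΘ : t ∈ Θ := hsub ht
  have hxs : ψ x s < 0 := hTneg x s hsΘ hs.1
  have hxt : ψ x t < 0 := hTneg x t htΘ ht.1
  have hys : 0 < ψ y s := hTpos y s hsΘ hs.2
  have hyt : 0 < ψ y t := hTpos y t htΘ ht.2
  have hps : 0 < p s := hp s hsΘ
  have hpt : 0 < p t := hp t htΘ
  have h1 : p t * ψ x t ≤ p s * ψ x s := hdec x hsΘ htΘ hst
  have h2 : p t * ψ y t ≤ p s * ψ y s := hdec y hsΘ htΘ hst
  simp only [neg_le_neg_iff]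
  rw [div_le_div_iff₀ hyt hys]
  nlinarith [mul_pos hps hys, mul_pos hpt hyt, mul_pos hps hpt,
    mul_neg_of_pos_of_neg hpt hxt]
end

section
/- Suppose ψ is a Z₁-function, for each z ∈ X the map t ↦ ψ(z,t) is continuously differentiable on Θ \ {ϑ₁(z)}, and for each x, y ∈ X with ϑ₁(x) < ϑ₁(y) the map t ↦ −ψ(x,t)/ψ(y,t) is increasing on (ϑ₁(x), ϑ₁(y)). Then for all t ∈ Θ and all x, y ∈ X with ϑ₁(x) < t < ϑ₁(y), one has ∂₂ψ(y,t)/ψ(y,t) ≤ ∂₂ψ(x,t)/ψ(x,t). -/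
open Set Filter Topology

/-- If `ψ` is a `Z₁`-function, continuously differentiable in its second variable off
`ϑ₁(z)`, and the quotient map `t ↦ -ψ(x,t)/ψ(y,t)` is increasing on `(ϑ₁(x), ϑ₁(y))`
whenever `ϑ₁(x) < ϑ₁(y)`, then for all `t ∈ Θ` and `x, y` with `ϑ₁(x) < t < ϑ₁(y)` one
has `∂₂ψ(y,t)/ψ(y,t) ≤ ∂₂ψ(x,t)/ψ(x,t)`. -/
theorem logderiv_ineq {X : Type*} [Nonempty X]
    (Θ : Set ℝ) (hopen : IsOpen Θ) (hord : Θ.OrdConnected)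
    (hnd : ∃ a ∈ Θ, ∃ b ∈ Θ, a ≠ b)
    (ψ : X → ℝ → ℝ)
    (ϑ : X → ℝ) (hϑmem : ∀ x : X, ϑ x ∈ Θ)
    (hTpos : ∀ x : X, ∀ t ∈ Θ, t < ϑ x → 0 < ψ x t)
    (hTneg : ∀ x : X, ∀ t ∈ Θ, ϑ x < t → ψ x t < 0)
    (hZ : ∀ x : X, ψ x (ϑ x) = 0)
    (hdiff : ∀ z : X, ∀ t ∈ Θ \ {ϑ z}, DifferentiableAt ℝ (ψ z) t)
    (hcontderiv : ∀ z : X, ContinuousOn (deriv (ψ z)) (Θ \ {ϑ z}))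
    (hmono : ∀ x y : X, ϑ x < ϑ y →
      MonotoneOn (fun t => -(ψ x t / ψ y t)) (Set.Ioo (ϑ x) (ϑ y))) :
    ∀ t ∈ Θ, ∀ x y : X, ϑ x < t → t < ϑ y →
      deriv (ψ y) t / ψ y t ≤ deriv (ψ x) t / ψ x t := by
  intro t htΘ x y hx hy
  have htx : t ≠ ϑ x := ne_of_gt hx
  have hty : t ≠ ϑ y := ne_of_lt hy
  have hψx : ψ x t < 0 := hTneg x t htΘ hx
  have hψy : 0 < ψ y t := hTpos y t htΘ hy
  have hdx : HasDerivAt (ψ x) (deriv (ψ x) t) t :=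
    (hdiff x t ⟨htΘ, htx⟩).hasDerivAt
  have hdy : HasDerivAt (ψ y) (deriv (ψ y) t) t :=
    (hdiff y t ⟨htΘ, hty⟩).hasDerivAt
  set f : ℝ → ℝ := fun s => -(ψ x s / ψ y s) with hf
  set d : ℝ :=
    -((deriv (ψ x) t * ψ y t - ψ x t * deriv (ψ y) t) / (ψ y t) ^ 2) with hd
  have hfd : HasDerivAt f d t := (hdx.div hdy hψy.ne').neg
  have hmon := hmono x y (hx.trans hy)
  have htmem : t ∈ Set.Ioo (ϑ x) (ϑ y) := ⟨hx, hy⟩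
  -- derivative of monotone function is nonneg
  have hdnn : 0 ≤ d := by
    have hslope : Filter.Tendsto (slope f t) (𝓝[>] t) (𝓝 d) :=
      (hasDerivAt_iff_tendsto_slope.mp hfd).mono_left
        (nhdsWithin_mono t fun s hs => ne_of_gt hs)
    refine ge_of_tendsto hslope ?_
    filter_upwards [Ioo_mem_nhdsGT_of_mem ⟨le_refl t, hy⟩] with s hs
    have hsmem : s ∈ Set.Ioo (ϑ x) (ϑ y) := ⟨hx.trans hs.1, hs.2⟩
    have hle : f t ≤ f s := hmon htmem hsmem hs.1.le
    rw [slope_def_field]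
    have : (0:ℝ) < s - t := sub_pos.2 hs.1
    exact div_nonneg (by linarith) (by linarith)
  have hsq : (0:ℝ) < ψ y t ^ 2 := by positivity
  have h2 : (deriv (ψ x) t * ψ y t - ψ x t * deriv (ψ y) t) / ψ y t ^ 2 ≤ 0 := by
    rw [hd, neg_nonneg] at hdnn; exact hdnn
  have hnum : deriv (ψ x) t * ψ y t - ψ x t * deriv (ψ y) t ≤ 0 := by
    calc deriv (ψ x) t * ψ y t - ψ x t * deriv (ψ y) t
        = (deriv (ψ x) t * ψ y t - ψ x t * deriv (ψ y) t) / ψ y t ^ 2 * ψ y t ^ 2 := by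
          field_simp
      _ ≤ 0 := mul_nonpos_iff.mpr (Or.inr ⟨h2, hsq.le⟩)
  have hdenom : ψ x t * ψ y t < 0 := mul_neg_of_neg_of_pos hψx hψy
  have heq : deriv (ψ x) t / ψ x t - deriv (ψ y) t / ψ y t =
      (deriv (ψ x) t * ψ y t - ψ x t * deriv (ψ y) t) / (ψ x t * ψ y t) := by
    have hx0 : ψ x t ≠ 0 := hψx.ne
    have hy0 : ψ y t ≠ 0 := hψy.ne'
    field_simp
  have : 0 ≤ (deriv (ψ x) t * ψ y t - ψ x t * deriv (ψ y) t) / (ψ x t * ψ y t) :=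
    div_nonneg_iff.mpr (Or.inr ⟨hnum, hdenom.le⟩)
  linarith [heq ▸ this]
end

section
/- Monotone representation theorem: Let ψ be a Z₁-function such that for each z ∈ X the map t ↦ ψ(z,t) is continuously differentiable on Θ \ {ϑ₁(z)}, and assume that for each t ∈ Θ there exist x, y ∈ X with ϑ₁(x) < t < ϑ₁(y). Then the following are equivalent: (i) for all x, y ∈ X with ϑ₁(x) < ϑ₁(y), the map t ↦ −ψ(x,t)/ψ(y,t) is increasing on (ϑ₁(x), ϑ₁(y)); (ii) there exists a positive, locally absolutely continuous function p : Θ → ℝ such that for every z ∈ X the map t ↦ p(t)ψ(z,t) is decreasing on Θ and locally absolutely continuous on Θ \ {ϑ₁(z)}. -/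
open Set

/-- `f` is absolutely continuous on the compact interval `[a,b]`. -/
def AbsContOnIcc (f : ℝ → ℝ) (a b : ℝ) : Prop :=
  ∀ ε > (0 : ℝ), ∃ δ > (0 : ℝ), ∀ (n : ℕ) (u v : Fin n → ℝ),
    (∀ i, a ≤ u i ∧ u i ≤ v i ∧ v i ≤ b) →
    (Pairwise fun i j => Set.Ioo (u i) (v i) ∩ Set.Ioo (u j) (v j) = ∅) →
    (∑ i, (v i - u i)) < δ → (∑ i, |f (v i) - f (u i)|) < ε

/-- `f` is locally absolutely continuous on the set `U`. -/
def LocAbsCont (f : ℝ → ℝ) (U : Set ℝ) : Prop :=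
  ∀ a b : ℝ, a ≤ b → Set.Icc a b ⊆ U → AbsContOnIcc f a b


namespace MonoRep

structure Ctx {X : Type*} (Θ : Set ℝ) (ψ : X → ℝ → ℝ) (ϑ : X → ℝ) : Prop where
  hord : Θ.OrdConnected
  hϑmem : ∀ x, ϑ x ∈ Θ
  hTpos : ∀ x, ∀ t ∈ Θ, t < ϑ x → 0 < ψ x t
  hTneg : ∀ x, ∀ t ∈ Θ, ϑ x < t → ψ x t < 0
  hZ : ∀ x, ψ x (ϑ x) = 0
  hdiff : ∀ z, ∀ t ∈ Θ \ {ϑ z}, DifferentiableAt ℝ (ψ z) t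
  hcontderiv : ∀ z, ContinuousOn (deriv (ψ z)) (Θ \ {ϑ z})
  hmono : ∀ x y, ϑ x < ϑ y → MonotoneOn (fun t => -(ψ x t / ψ y t)) (Set.Ioo (ϑ x) (ϑ y))
  hsurr : ∀ t ∈ Θ, ∃ x y, ϑ x < t ∧ t < ϑ y

variable {X : Type*}

noncomputable def gg (ψ : X → ℝ → ℝ) (z : X) (t : ℝ) : ℝ := Real.log (ψ z t)

noncomputable def aa (ψ : X → ℝ → ℝ) (ϑ : X → ℝ) (s t : ℝ) : ℝ :=
  sSup ((fun z => gg ψ z s - gg ψ z t) '' {z | ϑ z < s})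

noncomputable def bb (ψ : X → ℝ → ℝ) (ϑ : X → ℝ) (s t : ℝ) : ℝ :=
  sInf ((fun w => gg ψ w s - gg ψ w t) '' {w | t < ϑ w})

variable {Θ : Set ℝ} {ψ : X → ℝ → ℝ} {ϑ : X → ℝ}

theorem key (C : Ctx Θ ψ ϑ) {z w : X} {s t : ℝ} (hs : s ∈ Θ) (ht : t ∈ Θ)
    (hzs : ϑ z < s) (hst : s ≤ t) (htw : t < ϑ w) :
    gg ψ z s - gg ψ z t ≤ gg ψ w s - gg ψ w t := by
  rcases eq_or_lt_of_le hst with rfl | hst'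
  · simp
  have hzw : ϑ z < ϑ w := hzs.trans (hst'.trans htw)
  have hm := C.hmono z w hzw (a := s) (b := t) ⟨hzs, hst'.trans htw⟩ ⟨hzs.trans hst', htw⟩ hst
  have hzsn : ψ z s < 0 := C.hTneg z s hs hzs
  have hztn : ψ z t < 0 := C.hTneg z t ht (hzs.trans hst')
  have hwsp : 0 < ψ w s := C.hTpos w s hs (hst'.trans htw)
  have hwtp : 0 < ψ w t := C.hTpos w t ht htw
  have h1 : ψ z t / ψ w t ≤ ψ z s / ψ w s := by
    simpa using neg_le_neg_iff.mp hm
  have h2 : ψ z t * ψ w s ≤ ψ z s * ψ w t := (div_le_div_iff₀ hwtp hwsp).mp h1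
  have h3 : (-ψ z s) * ψ w t ≤ (-ψ z t) * ψ w s := by nlinarith
  have hzs' : (0:ℝ) < -ψ z s := by linarith
  have hzt' : (0:ℝ) < -ψ z t := by linarith
  have h4 := Real.log_le_log (mul_pos hzs' hwtp) h3
  rw [Real.log_mul hzs'.ne' hwtp.ne',
    Real.log_mul hzt'.ne' hwsp.ne',
    Real.log_neg_eq_log, Real.log_neg_eq_log] at h4
  simp only [gg]; linarith

theorem aa_le (C : Ctx Θ ψ ϑ) {s t : ℝ} (hs : s ∈ Θ) (ht : t ∈ Θ) (hst : s ≤ t)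
    {z : X} (hz : ϑ z < s) : gg ψ z s - gg ψ z t ≤ aa ψ ϑ s t := by
  obtain ⟨_, y₀, _, hy₀⟩ := C.hsurr t ht
  refine le_csSup ⟨gg ψ y₀ s - gg ψ y₀ t, ?_⟩ ⟨z, hz, rfl⟩
  rintro r ⟨z', hz', rfl⟩
  exact key C hs ht hz' hst hy₀

theorem bb_le (C : Ctx Θ ψ ϑ) {s t : ℝ} (hs : s ∈ Θ) (ht : t ∈ Θ) (hst : s ≤ t)
    {w : X} (hw : t < ϑ w) : bb ψ ϑ s t ≤ gg ψ w s - gg ψ w t := by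
  obtain ⟨x₀, _, hx₀, _⟩ := C.hsurr s hs
  refine csInf_le ⟨gg ψ x₀ s - gg ψ x₀ t, ?_⟩ ⟨w, hw, rfl⟩
  rintro r ⟨w', hw', rfl⟩
  exact key C hs ht hx₀ hst hw'

theorem aa_le_bb (C : Ctx Θ ψ ϑ) {s t : ℝ} (hs : s ∈ Θ) (ht : t ∈ Θ) (hst : s ≤ t) :
    aa ψ ϑ s t ≤ bb ψ ϑ s t := by
  obtain ⟨x₀, _, hx₀, _⟩ := C.hsurr s hs
  obtain ⟨_, y₀, _, hy₀⟩ := C.hsurr t ht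
  refine csSup_le ⟨_, ⟨x₀, hx₀, rfl⟩⟩ ?_
  rintro r ⟨z, hz, rfl⟩
  refine le_csInf ⟨_, ⟨y₀, hy₀, rfl⟩⟩ ?_
  rintro r' ⟨w, hw, rfl⟩
  exact key C hs ht hz hst hw

theorem aa_self (C : Ctx Θ ψ ϑ) {s : ℝ} (hs : s ∈ Θ) : aa ψ ϑ s s = 0 := by
  obtain ⟨x₀, _, hx₀, _⟩ := C.hsurr s hs
  refine le_antisymm (csSup_le ⟨_, ⟨x₀, hx₀, rfl⟩⟩ ?_) (le_csSup ⟨0, ?_⟩ ⟨x₀, hx₀, by simp⟩)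
  · rintro r ⟨z, hz, rfl⟩; simp
  · rintro r ⟨z, hz, rfl⟩; simp

theorem bb_self (C : Ctx Θ ψ ϑ) {s : ℝ} (hs : s ∈ Θ) : bb ψ ϑ s s = 0 := by
  obtain ⟨_, y₀, _, hy₀⟩ := C.hsurr s hs
  refine le_antisymm (csInf_le ⟨0, ?_⟩ ⟨y₀, hy₀, by simp⟩) (le_csInf ⟨_, ⟨y₀, hy₀, rfl⟩⟩ ?_)
  · rintro r ⟨w, hw, rfl⟩; simp
  · rintro r ⟨w, hw, rfl⟩; simp

theorem aa_subadd (C : Ctx Θ ψ ϑ) {s t u : ℝ} (hs : s ∈ Θ) (ht : t ∈ Θ) (hu : u ∈ Θ)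
    (hst : s ≤ t) (htu : t ≤ u) : aa ψ ϑ s u ≤ aa ψ ϑ s t + aa ψ ϑ t u := by
  obtain ⟨x₀, _, hx₀, _⟩ := C.hsurr s hs
  refine csSup_le ⟨_, ⟨x₀, hx₀, rfl⟩⟩ ?_
  rintro r ⟨z, hz, rfl⟩
  have h1 := aa_le C hs ht hst hz
  have h2 := aa_le C ht hu htu (lt_of_lt_of_le hz hst)
  dsimp only
  linarith

theorem bb_superadd (C : Ctx Θ ψ ϑ) {s t u : ℝ} (hs : s ∈ Θ) (ht : t ∈ Θ) (hu : u ∈ Θ)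
    (hst : s ≤ t) (htu : t ≤ u) : bb ψ ϑ s t + bb ψ ϑ t u ≤ bb ψ ϑ s u := by
  obtain ⟨_, y₀, _, hy₀⟩ := C.hsurr u hu
  refine le_csInf ⟨_, ⟨y₀, hy₀, rfl⟩⟩ ?_
  rintro r ⟨w, hw, rfl⟩
  have h1 := bb_le C hs ht hst (lt_of_le_of_lt htu hw)
  have h2 := bb_le C ht hu htu hw
  dsimp only
  linarith


def CS (Θ : Set ℝ) (ψ : X → ℝ → ℝ) (ϑ : X → ℝ) (s t : ℝ) : Set ℝ :=
  {r | ∃ n, ∃ u : ℕ → ℝ, u 0 = s ∧ u n = t ∧ (∀ i < n, u i ≤ u (i+1)) ∧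
    (∀ i ≤ n, u i ∈ Θ) ∧ r = ∑ i ∈ Finset.range n, aa ψ ϑ (u i) (u (i+1))}

noncomputable def ah (Θ : Set ℝ) (ψ : X → ℝ → ℝ) (ϑ : X → ℝ) (s t : ℝ) : ℝ :=
  sSup (CS Θ ψ ϑ s t)

theorem chain0_le {n : ℕ} {u : ℕ → ℝ} (hstep : ∀ i < n, u i ≤ u (i+1)) :
    ∀ i ≤ n, u 0 ≤ u i := by
  intro i hi
  induction i with
  | zero => exact le_refl _
  | succ k ih =>
    exact (ih (Nat.le_of_succ_le hi)).trans (hstep k (Nat.lt_of_succ_le hi))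

theorem sum_le_bb (C : Ctx Θ ψ ϑ) :
    ∀ (n : ℕ) (u : ℕ → ℝ), (∀ i < n, u i ≤ u (i+1)) → (∀ i ≤ n, u i ∈ Θ) →
      ∑ i ∈ Finset.range n, aa ψ ϑ (u i) (u (i+1)) ≤ bb ψ ϑ (u 0) (u n) := by
  intro n
  induction n with
  | zero =>
    intro u _ hmem
    simp [bb_self C (hmem 0 (le_refl _))]
  | succ n ih =>
    intro u hstep hmem
    have h1 := ih u (fun i hi => hstep i (hi.trans (Nat.lt_succ_self n)))
      (fun i hi => hmem i (hi.trans (Nat.le_succ n)))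
    have h2 := aa_le_bb C (hmem n (Nat.le_succ n)) (hmem (n+1) (le_refl _))
      (hstep n (Nat.lt_succ_self n))
    have h3 := bb_superadd C (hmem 0 (Nat.zero_le _)) (hmem n (Nat.le_succ n))
      (hmem (n+1) (le_refl _)) (chain0_le (fun i hi => hstep i (hi.trans (Nat.lt_succ_self n))) n (le_refl _))
      (hstep n (Nat.lt_succ_self n))
    rw [Finset.sum_range_succ]
    linarith

theorem CS_le_bb (C : Ctx Θ ψ ϑ) {s t r : ℝ} (hr : r ∈ CS Θ ψ ϑ s t) : r ≤ bb ψ ϑ s t := by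
  obtain ⟨n, u, h0, hn, hstep, hmem, rfl⟩ := hr
  subst h0; subst hn
  exact sum_le_bb C n u hstep hmem

theorem CS_bddAbove (C : Ctx Θ ψ ϑ) {s t : ℝ} : BddAbove (CS Θ ψ ϑ s t) :=
  ⟨bb ψ ϑ s t, fun _ hr => CS_le_bb C hr⟩

theorem aa_mem_CS {s t : ℝ} (hs : s ∈ Θ) (ht : t ∈ Θ) (hst : s ≤ t) :
    aa ψ ϑ s t ∈ CS Θ ψ ϑ s t := by
  refine ⟨1, fun i => if i = 0 then s else t, by simp, by simp, ?_, ?_, by simp⟩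
  · intro i hi
    interval_cases i
    simpa using hst
  · intro i hi
    interval_cases i
    · simpa using hs
    · simpa using ht

theorem aa_le_ah (C : Ctx Θ ψ ϑ) {s t : ℝ} (hs : s ∈ Θ) (ht : t ∈ Θ) (hst : s ≤ t) :
    aa ψ ϑ s t ≤ ah Θ ψ ϑ s t :=
  le_csSup (CS_bddAbove C) (aa_mem_CS hs ht hst)

theorem ah_le_bb (C : Ctx Θ ψ ϑ) {s t : ℝ} (hs : s ∈ Θ) (ht : t ∈ Θ) (hst : s ≤ t) :
    ah Θ ψ ϑ s t ≤ bb ψ ϑ s t :=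
  csSup_le ⟨_, aa_mem_CS hs ht hst⟩ (fun _ hr => CS_le_bb C hr)

theorem ah_self (C : Ctx Θ ψ ϑ) {s : ℝ} (hs : s ∈ Θ) : ah Θ ψ ϑ s s = 0 :=
  le_antisymm ((ah_le_bb C hs hs (le_refl _)).trans_eq (bb_self C hs))
    ((aa_self C hs).symm.trans_le (aa_le_ah C hs hs (le_refl _)))

theorem append_mem {s m m' : ℝ} {r : ℝ} (hr : r ∈ CS Θ ψ ϑ s m) (hmm' : m ≤ m')
    (hm' : m' ∈ Θ) : r + aa ψ ϑ m m' ∈ CS Θ ψ ϑ s m' := by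
  obtain ⟨n, u, h0, hn, hstep, hmem, rfl⟩ := hr
  refine ⟨n+1, fun i => if i ≤ n then u i else m', by simp [h0], by simp, ?_, ?_, ?_⟩
  · intro i hi
    dsimp only
    rcases Nat.lt_or_ge i n with h | h
    · rw [if_pos h.le, if_pos (Nat.succ_le_of_lt h)]
      exact hstep i h
    · have hin : i = n := Nat.le_antisymm (Nat.lt_succ_iff.mp hi) h
      subst hin
      rw [if_pos (le_refl _), if_neg (by omega)]
      rw [hn]; exact hmm'
  · intro i hi
    dsimp only
    rcases le_or_gt i n with h | h
    · rw [if_pos h]; exact hmem i h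
    · rw [if_neg (by omega)]; exact hm'
  · rw [Finset.sum_range_succ]
    congr 1
    · refine Finset.sum_congr rfl (fun i hi => ?_)
      have hi' := Finset.mem_range.mp hi
      dsimp only
      rw [if_pos hi'.le, if_pos (Nat.succ_le_of_lt hi')]
    · dsimp only
      rw [if_pos (le_refl _), if_neg (by omega), hn]

theorem append_le (C : Ctx Θ ψ ϑ) {s m m' : ℝ} (hs : s ∈ Θ) (hm : m ∈ Θ) (hsm : s ≤ m)
    (hm' : m' ∈ Θ) (hmm' : m ≤ m') : ah Θ ψ ϑ s m + aa ψ ϑ m m' ≤ ah Θ ψ ϑ s m' := by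
  have h : ah Θ ψ ϑ s m ≤ ah Θ ψ ϑ s m' - aa ψ ϑ m m' := by
    refine csSup_le ⟨_, aa_mem_CS hs hm hsm⟩ (fun r hr => ?_)
    have h2 : r + aa ψ ϑ m m' ≤ ah Θ ψ ϑ s m' := le_csSup (CS_bddAbove C) (append_mem hr hmm' hm')
    linarith
  linarith

theorem concat_mem {s : ℝ} :
    ∀ (n : ℕ) (u : ℕ → ℝ), (∀ i < n, u i ≤ u (i+1)) → (∀ i ≤ n, u i ∈ Θ) →
    ∀ r, r ∈ CS Θ ψ ϑ s (u 0) →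
      r + ∑ i ∈ Finset.range n, aa ψ ϑ (u i) (u (i+1)) ∈ CS Θ ψ ϑ s (u n) := by
  intro n
  induction n with
  | zero => intro u _ _ r hr; simpa using hr
  | succ n ih =>
    intro u hstep hmem r hr
    rw [Finset.sum_range_succ, ← add_assoc]
    exact append_mem (ih u (fun i hi => hstep i (hi.trans (Nat.lt_succ_self n)))
      (fun i hi => hmem i (hi.trans (Nat.le_succ n))) r hr)
      (hstep n (Nat.lt_succ_self n)) (hmem (n+1) (le_refl _))

theorem ah_add_ge (C : Ctx Θ ψ ϑ) {s t u : ℝ} (hs : s ∈ Θ) (ht : t ∈ Θ) (hu : u ∈ Θ)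
    (hst : s ≤ t) (htu : t ≤ u) : ah Θ ψ ϑ s t + ah Θ ψ ϑ t u ≤ ah Θ ψ ϑ s u := by
  have h : ah Θ ψ ϑ s t ≤ ah Θ ψ ϑ s u - ah Θ ψ ϑ t u := by
    refine csSup_le ⟨_, aa_mem_CS hs ht hst⟩ (fun r₁ h₁ => ?_)
    have h2 : ah Θ ψ ϑ t u ≤ ah Θ ψ ϑ s u - r₁ := by
      refine csSup_le ⟨_, aa_mem_CS ht hu htu⟩ (fun r₂ h₂ => ?_)
      obtain ⟨n, u₂, h0, hn, hstep, hmem, rfl⟩ := h₂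
      have hmem' : r₁ ∈ CS Θ ψ ϑ s (u₂ 0) := by rw [h0]; exact h₁
      have h3 : r₁ + ∑ i ∈ Finset.range n, aa ψ ϑ (u₂ i) (u₂ (i+1)) ≤ ah Θ ψ ϑ s (u₂ n) :=
        le_csSup (CS_bddAbove C) (concat_mem n u₂ hstep hmem r₁ hmem')
      rw [hn] at h3
      linarith
    linarith
  linarith

theorem chain_le (C : Ctx Θ ψ ϑ) :
    ∀ (n : ℕ) (u : ℕ → ℝ), (∀ i < n, u i ≤ u (i+1)) → (∀ i ≤ n, u i ∈ Θ) →
    ∀ t ∈ Θ, u 0 ≤ t → t ≤ u n →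
      ∑ i ∈ Finset.range n, aa ψ ϑ (u i) (u (i+1)) ≤ ah Θ ψ ϑ (u 0) t + ah Θ ψ ϑ t (u n) := by
  intro n
  induction n with
  | zero =>
    intro u _ hmem t htΘ h0t htn
    have : t = u 0 := le_antisymm htn h0t
    subst this
    simp [ah_self C htΘ]
  | succ n ih =>
    intro u hstep hmem t htΘ h0t htn1
    have hstep' : ∀ i < n, u i ≤ u (i+1) := fun i hi => hstep i (hi.trans (Nat.lt_succ_self n))
    have hmem' : ∀ i ≤ n, u i ∈ Θ := fun i hi => hmem i (hi.trans (Nat.le_succ n))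
    rcases le_total t (u n) with h | h
    · have h1 := ih u hstep' hmem' t htΘ h0t h
      have h2 : ah Θ ψ ϑ t (u n) + aa ψ ϑ (u n) (u (n+1)) ≤ ah Θ ψ ϑ t (u (n+1)) :=
        append_le C htΘ (hmem n (Nat.le_succ n)) h (hmem (n+1) (le_refl _))
          (hstep n (Nat.lt_succ_self n))
      rw [Finset.sum_range_succ]
      linarith
    · have hsum : ∑ i ∈ Finset.range n, aa ψ ϑ (u i) (u (i+1)) ≤ ah Θ ψ ϑ (u 0) (u n) :=
        le_csSup (CS_bddAbove C) ⟨n, u, rfl, rfl, hstep', hmem', rfl⟩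
      have hsplit := aa_subadd C (hmem n (Nat.le_succ n)) htΘ (hmem (n+1) (le_refl _)) h htn1
      have h2 : ah Θ ψ ϑ (u 0) (u n) + aa ψ ϑ (u n) t ≤ ah Θ ψ ϑ (u 0) t :=
        append_le C (hmem 0 (Nat.zero_le _)) (hmem n (Nat.le_succ n))
          (chain0_le hstep' n (le_refl _)) htΘ h
      have h3 : aa ψ ϑ t (u (n+1)) ≤ ah Θ ψ ϑ t (u (n+1)) :=
        aa_le_ah C htΘ (hmem (n+1) (le_refl _)) htn1
      rw [Finset.sum_range_succ]
      linarith

theorem ah_add (C : Ctx Θ ψ ϑ) {s t u : ℝ} (hs : s ∈ Θ) (ht : t ∈ Θ) (hu : u ∈ Θ)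
    (hst : s ≤ t) (htu : t ≤ u) : ah Θ ψ ϑ s u = ah Θ ψ ϑ s t + ah Θ ψ ϑ t u := by
  refine le_antisymm ?_ (ah_add_ge C hs ht hu hst htu)
  refine csSup_le ⟨_, aa_mem_CS hs hu (hst.trans htu)⟩ (fun r hr => ?_)
  obtain ⟨n, u', h0, hn, hstep, hmem, rfl⟩ := hr
  have := chain_le C n u' hstep hmem t ht (by rw [h0]; exact hst) (by rw [hn]; exact htu)
  rw [h0, hn] at this
  exact this

noncomputable def ell (Θ : Set ℝ) (ψ : X → ℝ → ℝ) (ϑ : X → ℝ) (t₀ t : ℝ) : ℝ :=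
  if t₀ ≤ t then ah Θ ψ ϑ t₀ t else -(ah Θ ψ ϑ t t₀)

theorem ell_diff (C : Ctx Θ ψ ϑ) {t₀ s t : ℝ} (ht₀ : t₀ ∈ Θ) (hs : s ∈ Θ) (ht : t ∈ Θ)
    (hst : s ≤ t) : ell Θ ψ ϑ t₀ t - ell Θ ψ ϑ t₀ s = ah Θ ψ ϑ s t := by
  unfold ell
  rcases le_or_gt t₀ s with h1 | h1
  · rw [if_pos (h1.trans hst), if_pos h1]
    have := ah_add C ht₀ hs ht h1 hst
    linarith
  · rcases le_or_gt t₀ t with h2 | h2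
    · rw [if_pos h2, if_neg (not_le.mpr h1)]
      have := ah_add C hs ht₀ ht h1.le h2
      linarith
    · rw [if_neg (not_le.mpr h2), if_neg (not_le.mpr h1)]
      have := ah_add C hs ht ht₀ hst h2.le
      linarith


theorem lipOnIcc_absCont {f : ℝ → ℝ} {a b K : ℝ}
    (h : ∀ s ∈ Set.Icc a b, ∀ t ∈ Set.Icc a b, |f t - f s| ≤ K * |t - s|) :
    AbsContOnIcc f a b := by
  intro ε hε
  rcases lt_or_ge (0:ℝ) (K + 1) with hK1 | hK1
  · refine ⟨ε / (K + 1), by positivity, ?_⟩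
    intro n u v hcon _ hsum
    have hb : ∀ i, |f (v i) - f (u i)| ≤ (K+1) * (v i - u i) := by
      intro i
      obtain ⟨h1, h2, h3⟩ := hcon i
      have hu : u i ∈ Set.Icc a b := ⟨h1, h2.trans h3⟩
      have hv : v i ∈ Set.Icc a b := ⟨h1.trans h2, h3⟩
      have h4 := h _ hu _ hv
      rw [abs_of_nonneg (by linarith : (0:ℝ) ≤ v i - u i)] at h4
      nlinarith [abs_nonneg (f (v i) - f (u i))]
    calc ∑ i, |f (v i) - f (u i)| ≤ ∑ i, (K+1) * (v i - u i) :=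
          Finset.sum_le_sum (fun i _ => hb i)
      _ = (K+1) * ∑ i, (v i - u i) := by rw [Finset.mul_sum]
      _ < (K+1) * (ε / (K+1)) := mul_lt_mul_of_pos_left hsum hK1
      _ = ε := by field_simp
  · refine ⟨1, by norm_num, ?_⟩
    intro n u v hcon _ _
    have hb : ∀ i, |f (v i) - f (u i)| ≤ 0 := by
      intro i
      obtain ⟨h1, h2, h3⟩ := hcon i
      have hu : u i ∈ Set.Icc a b := ⟨h1, h2.trans h3⟩
      have hv : v i ∈ Set.Icc a b := ⟨h1.trans h2, h3⟩
      have h4 := h _ hu _ hv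
      nlinarith [abs_nonneg (v i - u i), abs_nonneg (f (v i) - f (u i))]
    calc ∑ i, |f (v i) - f (u i)| ≤ ∑ i, (0:ℝ) := Finset.sum_le_sum (fun i _ => hb i)
      _ = 0 := by simp
      _ < ε := hε

theorem hasDeriv_lip {f f' : ℝ → ℝ} {a b : ℝ}
    (hd : ∀ x ∈ Set.Icc a b, HasDerivWithinAt f (f' x) (Set.Icc a b) x)
    (hc : ContinuousOn f' (Set.Icc a b)) :
    ∃ K, 0 ≤ K ∧ ∀ s ∈ Set.Icc a b, ∀ t ∈ Set.Icc a b, |f t - f s| ≤ K * |t - s| := by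
  obtain ⟨C0, hC0⟩ := (isCompact_Icc (a := a) (b := b)).exists_bound_of_continuousOn hc
  refine ⟨max C0 0, le_max_right _ _, fun s hs t ht => ?_⟩
  have h : ‖f t - f s‖ ≤ (max C0 0) * ‖t - s‖ :=
    Convex.norm_image_sub_le_of_norm_hasDerivWithin_le hd
      (fun x hx => (hC0 x hx).trans (le_max_left _ _)) (convex_Icc a b) hs ht
  simpa [Real.norm_eq_abs] using h

theorem exp_lip {u v M : ℝ} (hu : u ≤ M) (hv : v ≤ M) :
    |Real.exp u - Real.exp v| ≤ Real.exp M * |u - v| := by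
  wlog h : v ≤ u generalizing u v
  · rw [abs_sub_comm, abs_sub_comm u v]
    exact this hv hu (le_of_not_ge h)
  have h3 : Real.exp u ≤ Real.exp M := Real.exp_le_exp.mpr hu
  have h5 : Real.exp v ≤ Real.exp u := Real.exp_le_exp.mpr h
  rw [abs_of_nonneg (by linarith), abs_of_nonneg (by linarith)]
  have h1 := Real.add_one_le_exp (v - u)
  have h2 : Real.exp (v - u) * Real.exp u = Real.exp v := by
    rw [← Real.exp_add]; ring_nf
  have h4 : 0 < Real.exp u := Real.exp_pos u
  nlinarith

theorem lip_bound {f : ℝ → ℝ} {a b K : ℝ} (hab : a ≤ b)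
    (h : ∀ s ∈ Set.Icc a b, ∀ t ∈ Set.Icc a b, |f t - f s| ≤ K * |t - s|) :
    ∀ x ∈ Set.Icc a b, |f x| ≤ |f a| + K * |b - a| := by
  intro x hx
  have ha : a ∈ Set.Icc a b := ⟨le_refl _, hab⟩
  have hbm : b ∈ Set.Icc a b := ⟨hab, le_refl _⟩
  have h1 := h a ha x hx
  have htri : |f x| ≤ |f a| + |f x - f a| := by
    have := abs_add_le (f a) (f x - f a); simpa using this
  have h2 : |x - a| ≤ |b - a| := by
    rw [abs_of_nonneg (by linarith [hx.1]), abs_of_nonneg (by linarith)]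
    linarith [hx.2]
  rcases le_or_gt 0 K with hK | hK
  · have h3 : K * |x - a| ≤ K * |b - a| := mul_le_mul_of_nonneg_left h2 hK
    linarith
  · have hb1 := h a ha b hbm
    have hb2 : 0 ≤ K * |b - a| := (abs_nonneg _).trans hb1
    have h4 : K * |x - a| ≤ 0 := mul_nonpos_of_nonpos_of_nonneg hK.le (abs_nonneg _)
    linarith

theorem lip_mul {f g : ℝ → ℝ} {a b Kf Kg Mf Mg : ℝ}
    (hf : ∀ s ∈ Set.Icc a b, ∀ t ∈ Set.Icc a b, |f t - f s| ≤ Kf * |t - s|)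
    (hg : ∀ s ∈ Set.Icc a b, ∀ t ∈ Set.Icc a b, |g t - g s| ≤ Kg * |t - s|)
    (hMf : ∀ x ∈ Set.Icc a b, |f x| ≤ Mf) (hMg : ∀ x ∈ Set.Icc a b, |g x| ≤ Mg) :
    ∀ s ∈ Set.Icc a b, ∀ t ∈ Set.Icc a b,
      |f t * g t - f s * g s| ≤ (Mf * Kg + Mg * Kf) * |t - s| := by
  intro s hs t ht
  have he : f t * g t - f s * g s = f t * (g t - g s) + g s * (f t - f s) := by ring
  have h1 : |f t * g t - f s * g s| ≤ |f t| * |g t - g s| + |g s| * |f t - f s| := by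
    rw [he]
    exact (abs_add_le _ _).trans (by rw [abs_mul, abs_mul])
  have h2 := hf s hs t ht
  have h3 := hg s hs t ht
  have h4 := hMf t ht
  have h5 := hMg s hs
  have h6 : |f t| * |g t - g s| ≤ Mf * (Kg * |t - s|) :=
    mul_le_mul h4 h3 (abs_nonneg _) ((abs_nonneg _).trans h4)
  have h7 : |g s| * |f t - f s| ≤ Mg * (Kf * |t - s|) :=
    mul_le_mul h5 h2 (abs_nonneg _) ((abs_nonneg _).trans h5)
  nlinarith

theorem psi_ne_zero (C : Ctx Θ ψ ϑ) {z : X} {τ : ℝ} (hτ : τ ∈ Θ \ {ϑ z}) : ψ z τ ≠ 0 := by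
  rcases lt_trichotomy τ (ϑ z) with h | h | h
  · exact (C.hTpos z τ hτ.1 h).ne'
  · exact absurd h hτ.2
  · exact (C.hTneg z τ hτ.1 h).ne

theorem gg_lip (C : Ctx Θ ψ ϑ) {z : X} {a b : ℝ} (hsub : Set.Icc a b ⊆ Θ \ {ϑ z}) :
    ∃ K, 0 ≤ K ∧ ∀ s ∈ Set.Icc a b, ∀ t ∈ Set.Icc a b,
      |gg ψ z t - gg ψ z s| ≤ K * |t - s| := by
  apply hasDeriv_lip (f' := fun τ => deriv (ψ z) τ / ψ z τ)
  · intro τ hτ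
    have h1 : HasDerivAt (ψ z) (deriv (ψ z) τ) τ := (C.hdiff z τ (hsub hτ)).hasDerivAt
    exact ((h1.log (psi_ne_zero C (hsub hτ)))).hasDerivWithinAt
  · apply ContinuousOn.div
    · exact (C.hcontderiv z).mono hsub
    · intro τ hτ
      exact ((C.hdiff z τ (hsub hτ)).continuousAt).continuousWithinAt
    · intro τ hτ
      exact psi_ne_zero C (hsub hτ)

theorem psi_lip (C : Ctx Θ ψ ϑ) {z : X} {a b : ℝ} (hsub : Set.Icc a b ⊆ Θ \ {ϑ z}) :
    ∃ K, 0 ≤ K ∧ ∀ s ∈ Set.Icc a b, ∀ t ∈ Set.Icc a b,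
      |ψ z t - ψ z s| ≤ K * |t - s| := by
  apply hasDeriv_lip (f' := deriv (ψ z))
  · intro τ hτ
    exact ((C.hdiff z τ (hsub hτ)).hasDerivAt).hasDerivWithinAt
  · exact (C.hcontderiv z).mono hsub

theorem ell_lip (C : Ctx Θ ψ ϑ) {t₀ : ℝ} (ht₀ : t₀ ∈ Θ) {a b : ℝ} (hab : a ≤ b)
    (hsub : Set.Icc a b ⊆ Θ) :
    ∃ K, 0 ≤ K ∧ ∀ s ∈ Set.Icc a b, ∀ t ∈ Set.Icc a b,
      |ell Θ ψ ϑ t₀ t - ell Θ ψ ϑ t₀ s| ≤ K * |t - s| := by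
  have haΘ : a ∈ Θ := hsub ⟨le_refl _, hab⟩
  have hbΘ : b ∈ Θ := hsub ⟨hab, le_refl _⟩
  obtain ⟨x, _, hx, _⟩ := C.hsurr a haΘ
  obtain ⟨_, y, _, hy⟩ := C.hsurr b hbΘ
  have hsubx : Set.Icc a b ⊆ Θ \ {ϑ x} := by
    intro τ hτ
    refine ⟨hsub hτ, ?_⟩
    simp only [Set.mem_singleton_iff]
    intro hh
    exact absurd (hh ▸ hτ.1) (not_le.mpr hx)
  have hsuby : Set.Icc a b ⊆ Θ \ {ϑ y} := by
    intro τ hτ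
    refine ⟨hsub hτ, ?_⟩
    simp only [Set.mem_singleton_iff]
    intro hh
    exact absurd (hh ▸ hτ.2) (not_le.mpr hy)
  obtain ⟨Kx, hKx0, hKx⟩ := gg_lip C hsubx
  obtain ⟨Ky, hKy0, hKy⟩ := gg_lip C hsuby
  refine ⟨Kx + Ky, by linarith, ?_⟩
  suffices hmain : ∀ s ∈ Set.Icc a b, ∀ t ∈ Set.Icc a b, s ≤ t →
      |ell Θ ψ ϑ t₀ t - ell Θ ψ ϑ t₀ s| ≤ (Kx + Ky) * |t - s| by
    intro s hs t ht
    rcases le_total s t with h | h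
    · exact hmain s hs t ht h
    · rw [abs_sub_comm, abs_sub_comm t s]
      exact hmain t ht s hs h
  intro s hs t ht hst
  have hsΘ : s ∈ Θ := hsub hs
  have htΘ : t ∈ Θ := hsub ht
  have hd := ell_diff C ht₀ hsΘ htΘ hst
  have hxs : ϑ x < s := lt_of_lt_of_le hx hs.1
  have hyt : t < ϑ y := lt_of_le_of_lt ht.2 hy
  have h1 : gg ψ x s - gg ψ x t ≤ ah Θ ψ ϑ s t :=
    (aa_le C hsΘ htΘ hst hxs).trans (aa_le_ah C hsΘ htΘ hst)
  have h2 : ah Θ ψ ϑ s t ≤ gg ψ y s - gg ψ y t :=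
    (ah_le_bb C hsΘ htΘ hst).trans (bb_le C hsΘ htΘ hst hyt)
  have e1 := abs_le.mp (hKx s hs t ht)
  have e2 := abs_le.mp (hKy s hs t ht)
  have habs : |t - s| = t - s := abs_of_nonneg (by linarith)
  rw [habs] at e1 e2 ⊢
  rw [hd, abs_le]
  constructor <;> nlinarith [e1.1, e1.2, e2.1, e2.2]


theorem p_antitone (C : Ctx Θ ψ ϑ) {t₀ : ℝ} (ht₀ : t₀ ∈ Θ) (z : X) :
    AntitoneOn (fun t => Real.exp (ell Θ ψ ϑ t₀ t) * ψ z t) Θ := by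
  intro s hs t ht hst
  dsimp only
  have hd := ell_diff C ht₀ hs ht hst
  rcases lt_or_ge (ϑ z) s with h1 | h1
  · have hψs : ψ z s < 0 := C.hTneg z s hs h1
    have hψt : ψ z t < 0 := C.hTneg z t ht (lt_of_lt_of_le h1 hst)
    have hterm : gg ψ z s - gg ψ z t ≤ ah Θ ψ ϑ s t :=
      (aa_le C hs ht hst h1).trans (aa_le_ah C hs ht hst)
    have e1 : ell Θ ψ ϑ t₀ s + Real.log (-ψ z s) ≤ ell Θ ψ ϑ t₀ t + Real.log (-ψ z t) := by
      rw [Real.log_neg_eq_log, Real.log_neg_eq_log]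
      simp only [gg] at hterm
      linarith
    have e2 := Real.exp_le_exp.mpr e1
    rw [Real.exp_add, Real.exp_add, Real.exp_log (by linarith : (0:ℝ) < -ψ z s),
      Real.exp_log (by linarith : (0:ℝ) < -ψ z t)] at e2
    linarith
  · rcases lt_or_ge t (ϑ z) with h2 | h2
    · have hψs : 0 < ψ z s := C.hTpos z s hs (lt_of_le_of_lt hst h2)
      have hψt : 0 < ψ z t := C.hTpos z t ht h2
      have hterm : ah Θ ψ ϑ s t ≤ gg ψ z s - gg ψ z t :=
        (ah_le_bb C hs ht hst).trans (bb_le C hs ht hst h2)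
      have e1 : ell Θ ψ ϑ t₀ t + Real.log (ψ z t) ≤ ell Θ ψ ϑ t₀ s + Real.log (ψ z s) := by
        simp only [gg] at hterm
        linarith
      have e2 := Real.exp_le_exp.mpr e1
      rw [Real.exp_add, Real.exp_add, Real.exp_log hψs, Real.exp_log hψt] at e2
      linarith
    · have hψt : ψ z t ≤ 0 := by
        rcases eq_or_lt_of_le h2 with h | h
        · rw [← h, C.hZ z]
        · exact (C.hTneg z t ht h).le
      have hψs : 0 ≤ ψ z s := by
        rcases eq_or_lt_of_le h1 with h | h
        · rw [h, C.hZ z]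
        · exact (C.hTpos z s hs h).le
      have hA : Real.exp (ell Θ ψ ϑ t₀ t) * ψ z t ≤ 0 :=
        mul_nonpos_iff.mpr (Or.inl ⟨(Real.exp_pos _).le, hψt⟩)
      have hB : 0 ≤ Real.exp (ell Θ ψ ϑ t₀ s) * ψ z s :=
        mul_nonneg (Real.exp_pos _).le hψs
      linarith

theorem p_lip (C : Ctx Θ ψ ϑ) {t₀ : ℝ} (ht₀ : t₀ ∈ Θ) {A B : ℝ} (hAB : A ≤ B)
    (hsub : Set.Icc A B ⊆ Θ) :
    ∃ K, 0 ≤ K ∧ ∀ s ∈ Set.Icc A B, ∀ t ∈ Set.Icc A B,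
      |Real.exp (ell Θ ψ ϑ t₀ t) - Real.exp (ell Θ ψ ϑ t₀ s)| ≤ K * |t - s| := by
  obtain ⟨K, hK0, hK⟩ := ell_lip C ht₀ hAB hsub
  set M := |ell Θ ψ ϑ t₀ A| + K * |B - A| with hM
  have hMb : ∀ x ∈ Set.Icc A B, ell Θ ψ ϑ t₀ x ≤ M := fun x hx =>
    (le_abs_self _).trans (lip_bound hAB hK x hx)
  refine ⟨Real.exp M * K, by positivity, fun s hs t ht => ?_⟩
  calc |Real.exp (ell Θ ψ ϑ t₀ t) - Real.exp (ell Θ ψ ϑ t₀ s)|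
      ≤ Real.exp M * |ell Θ ψ ϑ t₀ t - ell Θ ψ ϑ t₀ s| := exp_lip (hMb t ht) (hMb s hs)
    _ ≤ Real.exp M * (K * |t - s|) :=
        mul_le_mul_of_nonneg_left (hK s hs t ht) (Real.exp_pos M).le
    _ = Real.exp M * K * |t - s| := by ring

theorem p_locAbsCont (C : Ctx Θ ψ ϑ) {t₀ : ℝ} (ht₀ : t₀ ∈ Θ) :
    LocAbsCont (fun t => Real.exp (ell Θ ψ ϑ t₀ t)) Θ := by
  intro A B hAB hsub
  obtain ⟨K, hK0, hK⟩ := p_lip C ht₀ hAB hsub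
  exact lipOnIcc_absCont hK

theorem prod_locAbsCont (C : Ctx Θ ψ ϑ) {t₀ : ℝ} (ht₀ : t₀ ∈ Θ) (z : X) :
    LocAbsCont (fun t => Real.exp (ell Θ ψ ϑ t₀ t) * ψ z t) (Θ \ {ϑ z}) := by
  intro A B hAB hsub
  have hsubΘ : Set.Icc A B ⊆ Θ := fun τ hτ => (hsub hτ).1
  obtain ⟨K, hK0, hK⟩ := p_lip C ht₀ hAB hsubΘ
  obtain ⟨Kψ, hKψ0, hKψ⟩ := psi_lip C hsub
  have hpb := lip_bound hAB hK
  have hψb := lip_bound hAB hKψ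
  exact lipOnIcc_absCont (lip_mul hK hKψ hpb hψb)

end MonoRep

/-- Monotone representation theorem for generalized `ψ`-estimators: the quotient maps
`t ↦ -ψ(x,t)/ψ(y,t)` are increasing on `(ϑ₁(x), ϑ₁(y))` if and only if there is a
positive locally absolutely continuous weight `p` making every `t ↦ p(t)ψ(z,t)`
decreasing on `Θ` (and locally absolutely continuous off `ϑ₁(z)`). -/


theorem monotone_representation {X : Type*} [Nonempty X]
    (Θ : Set ℝ) (hopen : IsOpen Θ) (hord : Θ.OrdConnected)
    (hnd : ∃ a ∈ Θ, ∃ b ∈ Θ, a ≠ b)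
    (ψ : X → ℝ → ℝ)
    (ϑ : X → ℝ) (hϑmem : ∀ x : X, ϑ x ∈ Θ)
    (hTpos : ∀ x : X, ∀ t ∈ Θ, t < ϑ x → 0 < ψ x t)
    (hTneg : ∀ x : X, ∀ t ∈ Θ, ϑ x < t → ψ x t < 0)
    (hZ : ∀ x : X, ψ x (ϑ x) = 0)
    (hdiff : ∀ z : X, ∀ t ∈ Θ \ {ϑ z}, DifferentiableAt ℝ (ψ z) t)
    (hcontderiv : ∀ z : X, ContinuousOn (deriv (ψ z)) (Θ \ {ϑ z}))
    (hsurr : ∀ t ∈ Θ, ∃ x y : X, ϑ x < t ∧ t < ϑ y) :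
    (∀ x y : X, ϑ x < ϑ y →
        MonotoneOn (fun t => -(ψ x t / ψ y t)) (Set.Ioo (ϑ x) (ϑ y))) ↔
    (∃ p : ℝ → ℝ, (∀ t ∈ Θ, 0 < p t) ∧ LocAbsCont p Θ ∧
        ∀ z : X, AntitoneOn (fun t => p t * ψ z t) Θ ∧
          LocAbsCont (fun t => p t * ψ z t) (Θ \ {ϑ z})) := by
  constructor
  · intro hm
    have C : MonoRep.Ctx Θ ψ ϑ := ⟨hord, hϑmem, hTpos, hTneg, hZ, hdiff, hcontderiv, hm, hsurr⟩
    have ht₀ : ϑ (Classical.arbitrary X) ∈ Θ := hϑmem _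
    exact ⟨fun t => Real.exp (MonoRep.ell Θ ψ ϑ (ϑ (Classical.arbitrary X)) t),
      fun t _ => Real.exp_pos _,
      MonoRep.p_locAbsCont C ht₀,
      fun z => ⟨MonoRep.p_antitone C ht₀ z, MonoRep.prod_locAbsCont C ht₀ z⟩⟩
  · rintro ⟨p, hp, _, hprod⟩ x y hxy s hs t ht hst
    have hsΘ : s ∈ Θ := hord.out (hϑmem x) (hϑmem y) ⟨hs.1.le, hs.2.le⟩
    have htΘ : t ∈ Θ := hord.out (hϑmem x) (hϑmem y) ⟨ht.1.le, ht.2.le⟩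
    have hxs : ψ x s < 0 := hTneg x s hsΘ hs.1
    have hxt : ψ x t < 0 := hTneg x t htΘ ht.1
    have hys : 0 < ψ y s := hTpos y s hsΘ hs.2
    have hyt : 0 < ψ y t := hTpos y t htΘ ht.2
    have h1 : p t * ψ x t ≤ p s * ψ x s := (hprod x).1 hsΘ htΘ hst
    have h2 : p t * ψ y t ≤ p s * ψ y s := (hprod y).1 hsΘ htΘ hst
    have hps := hp s hsΘ
    have hpt := hp t htΘ
    dsimp only
    rw [neg_le_neg_iff, div_le_div_iff₀ hyt hys]
    have h1' : p s * (-ψ x s) ≤ p t * (-ψ x t) := by linarith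
    have hm : (p s * (-ψ x s)) * (p t * ψ y t) ≤ (p t * (-ψ x t)) * (p s * ψ y s) :=
      mul_le_mul h1' h2 (mul_pos hpt hyt).le
        (mul_nonneg hpt.le (by linarith : (0:ℝ) ≤ -ψ x t))
    have key2 : (p s * p t) * (ψ x t * ψ y s) ≤ (p s * p t) * (ψ x s * ψ y t) := by
      nlinarith [hm]
    exact le_of_mul_le_mul_left key2 (mul_pos hps hpt)
end
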